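/- Let K ⊂ ℝ^d be an element with at most one designated outflow face e_K⁺, and define P_h⁺ : H¹(K) → P_k(K) by the conditions ∫_K (u − P_h⁺u) v dx = 0 for all v ∈ P_{k−1}(K) and ∫_{e_K⁺} (u − P_h⁺u) v ds = 0 for all v ∈ P_k(e_K⁺). Then this linear system uniquely determines P_h⁺u; i.e., if p ∈ P_k(K) satisfies ∫_K p v = 0 for all v ∈ P_{k−1}(K) and ∫_{e_K⁺} p v ds = 0 for all v ∈ P_k(e_K⁺), then p = 0. -/

import Mathlib

open MeasureTheory
open scoped RealInnerProductSpace

/-- `P_k(K)`: restrictions of `d`-variate polynomials of total degree at most `k`. -/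
def polyDeg (d k : ℕ) : Set (EuclideanSpace ℝ (Fin d) → ℝ) :=
  {f | ∃ p : MvPolynomial (Fin d) ℝ, p.totalDegree ≤ k ∧
    ∀ x : EuclideanSpace ℝ (Fin d), f x = MvPolynomial.eval (fun i => x i) p}

namespace WeakGalerkinAux

open MvPolynomial

/-! ### Polynomial algebra auxiliaries -/

lemma homogeneousComponent_totalDegree_ne_zero {σ : Type*} {R : Type*} [CommSemiring R]
    {f : MvPolynomial σ R} (hf : f ≠ 0) :
    homogeneousComponent f.totalDegree f ≠ 0 := by
  have h : f.support.Nonempty := by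
    rw [Finset.nonempty_iff_ne_empty]
    simpa [MvPolynomial.support_eq_empty] using hf
  obtain ⟨d, hd, hsum⟩ := Finset.exists_mem_eq_sup f.support h (fun d => d.sum fun _ e => e)
  have hdeg : d.degree = f.totalDegree := hsum.symm
  intro h0
  have := coeff_homogeneousComponent (φ := f) f.totalDegree d
  rw [h0, hdeg, if_pos rfl] at this
  simp only [coeff_zero] at this
  exact (mem_support_iff.mp hd) this.symm

lemma totalDegree_mul_eq' {σ : Type*} {R : Type*} [CommRing R] [IsDomain R]
    {f g : MvPolynomial σ R} (hf : f ≠ 0) (hg : g ≠ 0) :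
    (f * g).totalDegree = f.totalDegree + g.totalDegree := by
  refine le_antisymm (totalDegree_mul f g) ?_
  by_contra hlt
  push_neg at hlt
  have hcomp : homogeneousComponent (f.totalDegree + g.totalDegree) (f * g) = 0 :=
    homogeneousComponent_eq_zero _ _ hlt
  have hfg : f * g = ∑ i ∈ Finset.range (f.totalDegree + 1), ∑ j ∈ Finset.range (g.totalDegree + 1),
      homogeneousComponent i f * homogeneousComponent j g := by
    rw [← Finset.sum_mul_sum, sum_homogeneousComponent, sum_homogeneousComponent]
  have key : ∀ i ∈ Finset.range (f.totalDegree + 1), ∀ j ∈ Finset.range (g.totalDegree + 1),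
      homogeneousComponent (f.totalDegree + g.totalDegree)
        (homogeneousComponent i f * homogeneousComponent j g)
      = if i = f.totalDegree ∧ j = g.totalDegree
        then homogeneousComponent i f * homogeneousComponent j g else 0 := by
    intro i hi j hj
    have hhom : (homogeneousComponent i f * homogeneousComponent j g).IsHomogeneous (i + j) :=
      (homogeneousComponent_isHomogeneous i f).mul (homogeneousComponent_isHomogeneous j g)
    rw [homogeneousComponent_of_mem ((mem_homogeneousSubmodule _ _).mpr hhom)]
    simp only [Finset.mem_range, Nat.lt_succ_iff] at hi hj
    by_cases hij : i = f.totalDegree ∧ j = g.totalDegree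
    · rw [if_pos (by omega), if_pos hij]
    · rw [if_neg (by omega), if_neg hij]
  have hdecomp : homogeneousComponent (f.totalDegree + g.totalDegree) (f * g)
      = homogeneousComponent f.totalDegree f * homogeneousComponent g.totalDegree g := by
    rw [hfg, map_sum]
    rw [Finset.sum_congr rfl (fun i hi => map_sum _ _ _)]
    rw [Finset.sum_congr rfl (fun i hi => Finset.sum_congr rfl (fun j hj => key i hi j hj))]
    simp [ite_and, Finset.sum_ite_eq, Finset.mem_range]
  rw [hdecomp] at hcomp
  rcases mul_eq_zero.mp hcomp with h | h
  · exact homogeneousComponent_totalDegree_ne_zero hf h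
  · exact homogeneousComponent_totalDegree_ne_zero hg h

lemma eq_C_of_totalDegree_eq_zero {σ : Type*} {R : Type*} [CommSemiring R] [DecidableEq σ]
    {p : MvPolynomial σ R} (h : p.totalDegree = 0) :
    p = MvPolynomial.C (MvPolynomial.coeff 0 p) := by
  ext d
  rw [coeff_C]
  split_ifs with hd
  · rw [← hd]
  · by_contra hc
    have hdsupp : d ∈ p.support := mem_support_iff.mpr fun h' => hc (h'.symm ▸ rfl)
    have hz := (totalDegree_eq_zero_iff σ p).mp h d hdsupp
    have hd0 : d = 0 := by ext x; exact hz x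
    exact hd hd0.symm

/-! ### The zero locus of a nonzero polynomial is Lebesgue-null -/

lemma zero_locus_null_pi : ∀ (m : ℕ) (P : MvPolynomial (Fin m) ℝ), P ≠ 0 →
    (volume : Measure (Fin m → ℝ)) {x | MvPolynomial.eval x P = 0} = 0 := by
  intro m
  induction m with
  | zero =>
    intro P hP
    have : {x : Fin 0 → ℝ | MvPolynomial.eval x P = 0} = ∅ := by
      ext x
      simp only [Set.mem_setOf_eq, Set.mem_empty_iff_false, iff_false]
      rw [eq_C_of_isEmpty P]
      simp only [eval_C]
      intro h
      exact hP (by rw [eq_C_of_isEmpty P, h, map_zero])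
    rw [this, measure_empty]
  | succ m ih =>
    intro P hP
    set F := MvPolynomial.finSuccEquiv ℝ m P with hF
    have hF0 : F ≠ 0 := by
      intro h
      exact hP ((map_eq_zero_iff _ (AlgEquiv.injective _)).mp h)
    have hlc : F.leadingCoeff ≠ 0 := Polynomial.leadingCoeff_ne_zero.mpr hF0
    -- the set in product form
    set Z' : Set ((Fin m → ℝ) × ℝ) :=
      {q | MvPolynomial.eval (Fin.cons q.2 q.1) P = 0} with hZ'
    have hZ'meas : MeasurableSet Z' := by
      have hcont : Continuous fun q : (Fin m → ℝ) × ℝ =>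
          MvPolynomial.eval (Fin.cons q.2 q.1) P := by
        apply (MvPolynomial.continuous_eval P).comp
        exact (continuous_pi fun i => by
          refine Fin.cases ?_ ?_ i
          · exact continuous_snd
          · intro j; exact (continuous_apply j).comp continuous_fst)
      exact (isClosed_eq hcont continuous_const).measurableSet
    have hsec : ∀ s : Fin m → ℝ, MvPolynomial.eval s F.leadingCoeff ≠ 0 →
        (volume : Measure ℝ) {a | MvPolynomial.eval (Fin.cons a s) P = 0} = 0 := by
      intro s hs
      have hmap : (F.map (MvPolynomial.eval s)) ≠ 0 := by
        intro h
        have := Polynomial.coeff_map (MvPolynomial.eval s) F.natDegree (p := F)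
        rw [h] at this
        simp only [Polynomial.coeff_zero] at this
        exact hs (this.symm ▸ rfl)
      have hfin : Set.Finite {a : ℝ | MvPolynomial.eval (Fin.cons a s) P = 0} := by
        have : {a : ℝ | MvPolynomial.eval (Fin.cons a s) P = 0}
            ⊆ {a | (F.map (MvPolynomial.eval s)).IsRoot a} := by
          intro a ha
          simp only [Set.mem_setOf_eq] at ha ⊢
          rw [Polynomial.IsRoot, ← eval_eq_eval_mv_eval']
          exact ha
        exact (Polynomial.finite_setOf_isRoot hmap).subset this
      exact hfin.measure_zero _
    have hZ'0 : (volume : Measure ((Fin m → ℝ) × ℝ)) Z' = 0 := by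
      rw [show (volume : Measure ((Fin m → ℝ) × ℝ)) = Measure.prod volume volume from rfl]
      rw [Measure.measure_prod_null hZ'meas]
      have hnull := ih F.leadingCoeff hlc
      filter_upwards [measure_eq_zero_iff_ae_notMem.mp hnull] with s hs
      have : (Prod.mk s ⁻¹' Z') = {a : ℝ | MvPolynomial.eval (Fin.cons a s) P = 0} := rfl
      rw [this]
      exact hsec s (by simpa using hs)
    -- transfer via measurable equiv
    have hequiv := MeasureTheory.volume_preserving_piFinSuccAbove (fun _ : Fin (m+1) => ℝ) 0
    have hswap : MeasurePreserving (Prod.swap : ℝ × (Fin m → ℝ) → (Fin m → ℝ) × ℝ)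
        volume volume := by
      rw [MeasureTheory.Measure.volume_eq_prod, MeasureTheory.Measure.volume_eq_prod]
      exact MeasureTheory.Measure.measurePreserving_swap
    have hcomp := hswap.comp hequiv
    have hset : {x : Fin (m+1) → ℝ | MvPolynomial.eval x P = 0}
        = (Prod.swap ∘ (MeasurableEquiv.piFinSuccAbove (fun _ : Fin (m+1) => ℝ) 0)) ⁻¹' Z' := by
      ext x
      have hx : Fin.cons (x 0) (Fin.tail x) = x := Fin.cons_self_tail x
      simp only [Set.mem_setOf_eq, Set.mem_preimage, Function.comp_apply, hZ',
        MeasurableEquiv.piFinSuccAbove_apply, Fin.insertNthEquiv_zero,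
        Fin.consEquiv_symm_apply, Prod.swap_prod_mk, hx]
    rw [hset]
    have := hcomp.measure_preimage (s := Z') ?_
    · rw [this]
      exact hZ'0
    · exact hZ'meas.nullMeasurableSet

lemma zero_locus_null_euc (m : ℕ) (P : MvPolynomial (Fin m) ℝ) (hP : P ≠ 0) :
    (volume : Measure (EuclideanSpace ℝ (Fin m))) {x | MvPolynomial.eval (fun i => x i) P = 0}
      = 0 := by
  have hpre := (PiLp.volume_preserving_ofLp (Fin m)).measure_preimage
    (s := {x : Fin m → ℝ | MvPolynomial.eval x P = 0})
    (((isClosed_eq (MvPolynomial.continuous_eval P) continuous_const).measurableSet).nullMeasurableSet)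
  rw [zero_locus_null_pi m P hP] at hpre
  convert hpre using 2
  rfl

lemma eq_zero_of_zero_on_open {m : ℕ} (P : MvPolynomial (Fin m) ℝ)
    {U : Set (EuclideanSpace ℝ (Fin m))} (hU : IsOpen U) (hne : U.Nonempty)
    (h : ∀ x ∈ U, MvPolynomial.eval (fun i => x i) P = 0) : P = 0 := by
  by_contra hP
  have h1 := zero_locus_null_euc m P hP
  have h2 : U ⊆ {x : EuclideanSpace ℝ (Fin m) | MvPolynomial.eval (fun i => x i) P = 0} := h
  have h3 := measure_mono_null h2 h1
  exact (hU.measure_pos volume hne).ne' h3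

/-! ### Integrability helper -/

lemma integrableOn_of_bounded {X : Type*} [MeasurableSpace X] [MetricSpace X] [ProperSpace X]
    [BorelSpace X] (μ : Measure X) {s : Set X} (hs : Bornology.IsBounded s) (hfin : μ s ≠ ⊤)
    {f : X → ℝ} (hf : Continuous f) : Integrable f (μ.restrict s) := by
  have hcls : IsCompact (closure s) := hs.isCompact_closure
  obtain ⟨C, hC⟩ := hcls.exists_bound_of_continuousOn hf.continuousOn
  haveI : IsFiniteMeasure (μ.restrict s) :=
    ⟨by rw [Measure.restrict_apply_univ]; exact hfin.lt_top⟩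
  have h1 : ∀ᵐ x ∂μ.restrict s, x ∈ closure s := by
    rw [ae_iff]
    have hms : MeasurableSet {a : X | a ∉ closure s} := isClosed_closure.measurableSet.compl
    rw [Measure.restrict_apply hms]
    have : {x | ¬x ∈ closure s} ∩ s = ∅ := by
      apply Set.eq_empty_of_forall_notMem
      intro x ⟨hx1, hx2⟩
      exact hx1 (subset_closure hx2)
    rw [this, measure_empty]
  apply Integrable.mono' (integrable_const C) hf.aestronglyMeasurable
  filter_upwards [h1] with x hx using hC x hx

end WeakGalerkinAux

set_option maxHeartbeats 4000000 in
open WeakGalerkinAux MvPolynomial in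
theorem weak_galerkin_stmt_12 {d k : ℕ} (hd : 1 ≤ d)
    (K e : Set (EuclideanSpace ℝ (Fin d)))
    (n : EuclideanSpace ℝ (Fin d)) (c : ℝ)
    (hKopen : IsOpen K) (hKne : K.Nonempty) (hKconv : Convex ℝ K)
    (hKbdd : Bornology.IsBounded K)
    (hn : ‖n‖ = 1)
    (heK : e ⊆ frontier K)
    (hplane : ∀ x ∈ e, ⟪x, n⟫ = c)
    (hside : ∀ x ∈ K, ⟪x, n⟫ < c)
    (hepos : 0 < μH[((d : ℝ) - 1)] e)
    (p : EuclideanSpace ℝ (Fin d) → ℝ) (hp : p ∈ polyDeg d k)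
    (hmomK : ∀ q : EuclideanSpace ℝ (Fin d) → ℝ,
      (∃ P : MvPolynomial (Fin d) ℝ, P.totalDegree < k ∧
        ∀ x : EuclideanSpace ℝ (Fin d), q x = MvPolynomial.eval (fun i => x i) P) →
      ∫ x in K, p x * q x ∂volume = 0)
    (hmome : ∀ q ∈ polyDeg d k, ∫ x in e, p x * q x ∂(μH[((d : ℝ) - 1)]) = 0) :
    ∀ x, p x = 0 := by
  classical
  obtain ⟨N, rfl⟩ : ∃ N, d = N + 1 := ⟨d - 1, (Nat.succ_pred_eq_of_pos hd).symm⟩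
  obtain ⟨P, hPdeg, hPeval⟩ := hp
  set μ : Measure (EuclideanSpace ℝ (Fin (N + 1))) := μH[((N + 1 : ℕ) : ℝ) - 1] with hμ
  have hn0 : n ≠ 0 := by intro h; rw [h, norm_zero] at hn; exact one_ne_zero hn.symm
  have hcontp : Continuous p := by
    have hpfun : p = fun x => MvPolynomial.eval (fun i => x i) P := funext hPeval
    rw [hpfun]
    exact (MvPolynomial.continuous_eval P).comp (continuous_pi fun i => (continuous_apply i).comp (PiLp.continuous_ofLp 2 _))
  have hinner : ∀ x y : EuclideanSpace ℝ (Fin (N + 1)), ⟪x, y⟫ = ∑ i, x i * y i := by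
    intro x y
    rw [PiLp.inner_apply]
    simp [RCLike.inner_apply]
    exact Finset.sum_congr rfl fun i _ => mul_comm _ _
  -- ===== hyperplane parametrization =====
  have hdimV : Module.finrank ℝ ((Submodule.span ℝ {n})ᗮ : Submodule ℝ (EuclideanSpace ℝ (Fin (N+1)))) = N := by
    have h1 := Submodule.finrank_add_finrank_orthogonal (Submodule.span ℝ {n})
    rw [finrank_span_singleton hn0, finrank_euclideanSpace_fin] at h1
    omega
  set V : Submodule ℝ (EuclideanSpace ℝ (Fin (N+1))) := (Submodule.span ℝ {n})ᗮ with hV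
  set m := Module.finrank ℝ V with hm
  set b := stdOrthonormalBasis ℝ V with hb
  set ψ : EuclideanSpace ℝ (Fin m) → EuclideanSpace ℝ (Fin (N + 1)) :=
    fun y => c • n + ((b.repr.symm y : V) : EuclideanSpace ℝ (Fin (N + 1))) with hψ
  have hVorth : ∀ v : V, ⟪(v : EuclideanSpace ℝ (Fin (N + 1))), n⟫ = 0 := by
    intro v
    have h2 := v.2
    rw [Submodule.mem_orthogonal_singleton_iff_inner_right] at h2
    rw [real_inner_comm]
    exact h2
  have hψplane : ∀ y, ⟪ψ y, n⟫ = c := by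
    intro y
    rw [hψ]
    rw [inner_add_left, real_inner_smul_left, real_inner_self_eq_norm_sq, hn, hVorth]
    ring
  have hψiso : Isometry ψ := by
    apply Isometry.of_dist_eq
    intro y z
    simp only [hψ, dist_eq_norm, add_sub_add_left_eq_sub]
    rw [← Submodule.coe_sub, Submodule.norm_coe, ← map_sub, LinearIsometryEquiv.norm_map]
  have hrangeψ : ∀ x, ⟪x, n⟫ = c → x ∈ Set.range ψ := by
    intro x hx
    have hv : x - c • n ∈ V := by
      rw [hV, Submodule.mem_orthogonal_singleton_iff_inner_right, real_inner_comm,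
        inner_sub_left, real_inner_smul_left, real_inner_self_eq_norm_sq, hn, hx]
      ring
    refine ⟨b.repr ⟨x - c • n, hv⟩, ?_⟩
    rw [hψ]
    simp only [LinearIsometryEquiv.symm_apply_apply]
    abel
  -- ===== measure facts =====
  have hexp : ((N + 1 : ℕ) : ℝ) - 1 = (m : ℝ) := by
    rw [hdimV]; push_cast; ring
  set μ' : Measure (EuclideanSpace ℝ (Fin m)) := μH[(m : ℝ)] with hμ'
  haveI instH : μ'.IsAddHaarMeasure := by
    have hre : (μH[(m : ℝ)] : Measure (EuclideanSpace ℝ (Fin m)))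
        = μH[(Module.finrank ℝ (EuclideanSpace ℝ (Fin m)) : ℝ)] := by
      rw [finrank_euclideanSpace_fin]
    rw [hμ', hre]
    infer_instance
  have hsmul : μ' = (μ'.addHaarScalarFactor (volume : Measure (EuclideanSpace ℝ (Fin m)))) •
      (volume : Measure (EuclideanSpace ℝ (Fin m))) :=
    MeasureTheory.Measure.isAddLeftInvariant_eq_smul μ' volume
  have hμ'null : ∀ s : Set (EuclideanSpace ℝ (Fin m)), volume s = 0 → μ' s = 0 := by
    intro s hs
    rw [hsmul]
    simp [hs]
  have hμ'fin : ∀ s : Set (EuclideanSpace ℝ (Fin m)), Bornology.IsBounded s → μ' s ≠ ⊤ :=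
    fun s hs => hs.measure_lt_top.ne
  have hμψ : ∀ s : Set (EuclideanSpace ℝ (Fin m)), μ (ψ '' s) = μ' s := by
    intro s
    rw [hμ, hμ', hexp]
    exact hψiso.hausdorffMeasure_image (Or.inl (by positivity)) s
  -- ===== Step A : face integral forces p ≠ 0 to be μ-null inside e =====
  have hmeasp : MeasurableSet {x : EuclideanSpace ℝ (Fin (N + 1)) | p x ≠ 0} :=
    (isOpen_compl_singleton.preimage hcontp).measurableSet
  have hebdd : Bornology.IsBounded e :=
    hKbdd.closure.subset (heK.trans (frontier_subset_closure (s := K)))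
  have hface : μ ({x | p x ≠ 0} ∩ e) = 0 := by
    have hsq := hmome p ⟨P, hPdeg, hPeval⟩
    have hefin : μ e ≠ ⊤ := by
      have hsub : e ⊆ ψ '' (ψ ⁻¹' e) := by
        intro x hx
        obtain ⟨y, hy⟩ := hrangeψ x (hplane x hx)
        exact ⟨y, by rw [Set.mem_preimage, hy]; exact hx, hy⟩
      have h2 : μ (ψ '' (ψ ⁻¹' e)) = μ' (ψ ⁻¹' e) := hμψ _
      have h3 : μ' (ψ ⁻¹' e) ≠ ⊤ := hμ'fin _ (hψiso.antilipschitz.isBounded_preimage hebdd)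
      exact fun h => h3 (by rw [← h2]; exact top_le_iff.mp (h ▸ measure_mono hsub))
    have hint : Integrable (fun x => p x * p x) (μ.restrict e) :=
      WeakGalerkinAux.integrableOn_of_bounded μ hebdd hefin (hcontp.mul hcontp)
    have h0 : (fun x => p x * p x) =ᵐ[μ.restrict e] 0 := by
      rw [← MeasureTheory.integral_eq_zero_iff_of_nonneg (fun x => mul_self_nonneg (p x)) hint]
      exact hsq
    rw [Filter.EventuallyEq, ae_iff] at h0
    have hseteq : {x | ¬(fun x => p x * p x) x = (0 : EuclideanSpace ℝ (Fin (N+1)) → ℝ) x}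
        = {x | p x ≠ 0} := by
      ext x; simp [mul_self_eq_zero]
    rw [hseteq, Measure.restrict_apply hmeasp] at h0
    exact h0
  -- ===== Step A' : p vanishes on the hyperplane =====
  have hH : ∀ x : EuclideanSpace ℝ (Fin (N + 1)), ⟪x, n⟫ = c → p x = 0 := by
    set w : Fin m → EuclideanSpace ℝ (Fin (N + 1)) := fun j => ((b j : V) : _) with hw
    set g : Fin (N + 1) → MvPolynomial (Fin m) ℝ := fun i =>
      MvPolynomial.C (c * n i) + ∑ j, MvPolynomial.C (w j i) * MvPolynomial.X j with hg
    set Qψ := MvPolynomial.bind₁ g P with hQψ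
    have hcoord : ∀ (y : EuclideanSpace ℝ (Fin m)) (i : Fin (N + 1)),
        ψ y i = c * n i + ∑ j, y j * w j i := by
      intro y i
      have hrepr : (b.repr.symm y : V) = ∑ j, y j • b j := (b.sum_repr_symm y).symm
      have hco : ((b.repr.symm y : V) : EuclideanSpace ℝ (Fin (N+1))) i = ∑ j, y j * w j i := by
        rw [hrepr, Submodule.coe_sum]
        have h6 : ∀ j, ((y j • b j : V) : EuclideanSpace ℝ (Fin (N+1))) = y j • w j := by
          intro j; rfl
        simp_rw [h6]
        calc (∑ x : Fin m, y x • w x) i = ∑ x : Fin m, (y x • w x) i :=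
              by rw [WithLp.ofLp_sum, Finset.sum_apply]
          _ = ∑ x : Fin m, y x * w x i := rfl
      show (c • n) i + ((b.repr.symm y : V) : EuclideanSpace ℝ (Fin (N+1))) i = _
      rw [hco]
      rfl
    have hQeval : ∀ y : EuclideanSpace ℝ (Fin m),
        MvPolynomial.eval (fun j => y j) Qψ = p (ψ y) := by
      intro y
      rw [hPeval, hQψ]
      have h1 : MvPolynomial.eval (fun j => y j) (MvPolynomial.bind₁ g P)
          = MvPolynomial.eval (fun i => MvPolynomial.eval (fun j => y j) (g i)) P :=
        MvPolynomial.aeval_bind₁ (fun j => y j) g P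
      rw [h1]
      have h2 : (fun i => MvPolynomial.eval (fun j => y j) (g i)) = fun i => ψ y i := by
        funext i
        rw [hg]
        simp only [map_add, map_sum, MvPolynomial.eval_C, MvPolynomial.eval_mul,
          MvPolynomial.eval_X]
        rw [hcoord y i]
        congr 1
        exact Finset.sum_congr rfl fun j _ => by ring
      rw [h2]
    have hQ0 : Qψ = 0 := by
      by_contra hQne
      have hnull := WeakGalerkinAux.zero_locus_null_euc m Qψ hQne
      have h1 : μ' {y : EuclideanSpace ℝ (Fin m) | MvPolynomial.eval (fun i => y i) Qψ = 0} = 0 :=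
        hμ'null _ hnull
      have h2 : μ (ψ '' {y | MvPolynomial.eval (fun i => y i) Qψ = 0}) = 0 := by
        rw [hμψ]; exact h1
      have hcover : e ⊆ (ψ '' {y | MvPolynomial.eval (fun i => y i) Qψ = 0})
          ∪ ({x | p x ≠ 0} ∩ e) := by
        intro x hx
        by_cases hpx : p x = 0
        · left
          obtain ⟨y, hy⟩ := hrangeψ x (hplane x hx)
          exact ⟨y, by rw [Set.mem_setOf_eq, hQeval, hy]; exact hpx, hy⟩
        · right; exact ⟨hpx, hx⟩
      have hz := measure_mono_null hcover (measure_union_null h2 hface)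
      rw [hz] at hepos
      exact lt_irrefl 0 hepos
    intro x hx
    obtain ⟨y, rfl⟩ := hrangeψ x hx
    rw [← hQeval y, hQ0]
    simp
  -- ===== Step B =====
  rcases Nat.eq_zero_or_pos k with hk0 | hkpos
  · -- k = 0 : p is constant
    subst hk0
    have hP0 : P.totalDegree = 0 := Nat.le_zero.mp hPdeg
    have hPc := WeakGalerkinAux.eq_C_of_totalDegree_eq_zero hP0
    have hcn : ⟪(c • n : EuclideanSpace ℝ (Fin (N + 1))), n⟫ = c := by
      rw [real_inner_smul_left, real_inner_self_eq_norm_sq, hn]; ring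
    have h1 := hH _ hcn
    rw [hPeval, hPc, MvPolynomial.eval_C] at h1
    intro x
    rw [hPeval, hPc, MvPolynomial.eval_C]
    exact h1
  · -- k ≥ 1 : divide by the linear form
    obtain ⟨i0, hi0⟩ : ∃ i, n i ≠ 0 := by
      by_contra h
      push_neg at h
      exact hn0 (by ext i; simpa using h i)
    set σp : Equiv.Perm (Fin (N + 1)) := Equiv.swap 0 i0 with hσp
    set n' : Fin (N + 1) → ℝ := fun j => n (σp j) with hn'
    have hn'0 : n' 0 ≠ 0 := by
      rw [hn', hσp]
      simpa [Equiv.swap_apply_left] using hi0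
    set P' := MvPolynomial.rename (⇑σp) P with hP'
    set F := MvPolynomial.finSuccEquiv ℝ N P' with hF
    set Bp : MvPolynomial (Fin N) ℝ :=
      MvPolynomial.C (n' 0)⁻¹ *
        ((∑ j, MvPolynomial.C (n' j.succ) * MvPolynomial.X j) - MvPolynomial.C c) with hBp
    set M : Polynomial (MvPolynomial (Fin N) ℝ) := Polynomial.X + Polynomial.C Bp with hM
    have hMmonic : M.Monic := Polynomial.monic_X_add_C _
    set Q := F /ₘ M with hQ
    set R := F %ₘ M with hR
    have hFMQ : F = M * Q + R := by
      rw [hQ, hR, add_comm]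
      exact (Polynomial.modByMonic_add_div F M).symm
    set r₀ := R.coeff 0 with hr₀
    have hRC : R = Polynomial.C r₀ := by
      apply Polynomial.eq_C_of_degree_le_zero
      have h1 := Polynomial.degree_modByMonic_lt F hMmonic
      rw [hM, Polynomial.degree_X_add_C] at h1
      exact Nat.WithBot.lt_one_iff_le_zero.mp h1
    -- key evaluation identity
    have hswapswap : ∀ (x : EuclideanSpace ℝ (Fin (N + 1))), (fun j => x (σp j)) ∘ ⇑σp = fun i => x i := by
      intro x
      funext j
      exact congrArg x (Equiv.swap_apply_self 0 i0 j)
    have hsum_inner : ∀ x : EuclideanSpace ℝ (Fin (N + 1)),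
        ⟪x, n⟫ = n' 0 * x (σp 0) + ∑ j : Fin N, n' j.succ * x (σp j.succ) := by
      intro x
      rw [hinner]
      rw [← Equiv.sum_comp σp (fun i => x i * n i)]
      rw [Fin.sum_univ_succ]
      simp only [hn']
      congr 1
      · ring
      · exact Finset.sum_congr rfl fun j _ => by ring
    have hkey : ∀ x : EuclideanSpace ℝ (Fin (N + 1)),
        p x = (n' 0)⁻¹ * (⟪x, n⟫ - c) *
            Polynomial.eval ((fun j => x (σp j)) 0)
              (Polynomial.map (MvPolynomial.eval (Fin.tail fun j => x (σp j))) Q)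
          + MvPolynomial.eval (Fin.tail fun j => x (σp j)) r₀ := by
      intro x
      set y : Fin (N + 1) → ℝ := fun j => x (σp j) with hy
      have h1 : p x = MvPolynomial.eval y P' := by
        rw [hPeval, hP', MvPolynomial.eval_rename]
        rw [show y ∘ ⇑σp = fun i => x i from hswapswap x]
      have h2 : MvPolynomial.eval y P'
          = Polynomial.eval (y 0) (Polynomial.map (MvPolynomial.eval (Fin.tail y)) F) := by
        conv_lhs => rw [← Fin.cons_self_tail y]
        rw [MvPolynomial.eval_eq_eval_mv_eval']
      have h3 : Polynomial.eval (y 0) (Polynomial.map (MvPolynomial.eval (Fin.tail y)) F)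
          = (y 0 + MvPolynomial.eval (Fin.tail y) Bp) *
              Polynomial.eval (y 0) (Polynomial.map (MvPolynomial.eval (Fin.tail y)) Q)
            + MvPolynomial.eval (Fin.tail y) r₀ := by
        conv_lhs => rw [hFMQ, hRC]
        rw [Polynomial.map_add, Polynomial.map_mul, Polynomial.eval_add, Polynomial.eval_mul,
          Polynomial.map_C, Polynomial.eval_C]
        congr 2
        rw [hM, Polynomial.map_add, Polynomial.map_X, Polynomial.map_C, Polynomial.eval_add,
          Polynomial.eval_X, Polynomial.eval_C]
      have h4 : y 0 + MvPolynomial.eval (Fin.tail y) Bp = (n' 0)⁻¹ * (⟪x, n⟫ - c) := by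
        have htail : ∀ j : Fin N, Fin.tail y j = x (σp j.succ) := fun j => rfl
        rw [hBp]
        simp only [MvPolynomial.eval_mul, MvPolynomial.eval_C, map_sub, map_sum,
          MvPolynomial.eval_X]
        rw [hsum_inner x]
        simp_rw [htail]
        have hy0 : y 0 = x (σp 0) := rfl
        rw [hy0]
        field_simp
        ring
      rw [h1, h2, h3, h4]
    -- the remainder vanishes since p vanishes on the hyperplane
    have hr0 : r₀ = 0 := by
      apply MvPolynomial.funext
      intro s
      rw [map_zero]
      set a : ℝ := (n' 0)⁻¹ * (c - ∑ j : Fin N, n' j.succ * s j) with ha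
      set x : EuclideanSpace ℝ (Fin (N + 1)) :=
        WithLp.toLp 2 (fun j => (Fin.cons a s : Fin (N + 1) → ℝ) (σp j)) with hx
      have hxy : (fun j => x (σp j)) = Fin.cons a s := by
        funext j
        exact congrArg (Fin.cons a s) (Equiv.swap_apply_self 0 i0 j)
      have hxplane : ⟪x, n⟫ = c := by
        rw [hsum_inner x]
        have h0 : x (σp 0) = a := congrFun hxy 0
        have hsucc : ∀ j : Fin N, x (σp j.succ) = s j := fun j => by
          have := congrFun hxy j.succ
          simpa [Fin.cons_succ] using this
        simp_rw [h0, hsucc, ha]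
        field_simp
        ring
      have h5 := hH x hxplane
      rw [hkey x, hxplane, sub_self, mul_zero, zero_mul, zero_add, hxy, Fin.tail_cons] at h5
      exact h5
    -- the quotient as a multivariate polynomial
    set Q' := (MvPolynomial.finSuccEquiv ℝ N).symm Q with hQ'
    set Qmv := MvPolynomial.rename (⇑σp) Q' with hQmv
    have hQmveval : ∀ x : EuclideanSpace ℝ (Fin (N + 1)),
        MvPolynomial.eval (fun i => x i) Qmv
          = Polynomial.eval ((fun j => x (σp j)) 0)
              (Polynomial.map (MvPolynomial.eval (Fin.tail fun j => x (σp j))) Q) := by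
      intro x
      rw [hQmv, MvPolynomial.eval_rename]
      have hc : (fun i => x i) ∘ ⇑σp = fun j => x (σp j) := rfl
      rw [hc]
      conv_lhs => rw [← Fin.cons_self_tail (fun j => x (σp j))]
      rw [MvPolynomial.eval_eq_eval_mv_eval']
      rw [hQ', AlgEquiv.apply_symm_apply]
    have hfinal : ∀ x : EuclideanSpace ℝ (Fin (N + 1)),
        p x = (n' 0)⁻¹ * (⟪x, n⟫ - c) * MvPolynomial.eval (fun i => x i) Qmv := by
      intro x
      rw [hkey x, hr0]
      simp only [map_zero, add_zero]
      rw [hQmveval x]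
    by_cases hQzero : Q = 0
    · intro x
      rw [hfinal x, hQmv, hQ', hQzero, map_zero, map_zero]
      simp
    · have hQ'0 : Q' ≠ 0 := by
        intro h
        apply hQzero
        have : Q = MvPolynomial.finSuccEquiv ℝ N Q' := (AlgEquiv.apply_symm_apply _ _).symm
        rw [this, h, map_zero]
      set Lmv := (MvPolynomial.finSuccEquiv ℝ N).symm M with hLmv
      have hLne : Lmv ≠ 0 := by
        intro h
        have hM0 : M = 0 := by
          rw [← AlgEquiv.apply_symm_apply (MvPolynomial.finSuccEquiv ℝ N) M, ← hLmv, h, map_zero]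
        exact hMmonic.ne_zero hM0
      have hP'fact : P' = Lmv * Q' := by
        have hFMQ' : F = M * Q := by
          rw [hFMQ, hRC, hr0, map_zero, add_zero]
        calc P' = (MvPolynomial.finSuccEquiv ℝ N).symm F := (AlgEquiv.symm_apply_apply _ _).symm
          _ = (MvPolynomial.finSuccEquiv ℝ N).symm (M * Q) := by rw [← hFMQ']
          _ = Lmv * Q' := by rw [map_mul, ← hLmv, ← hQ']
      have hLdeg : 1 ≤ Lmv.totalDegree := by
        by_contra h
        push_neg at h
        have h0 : Lmv.totalDegree = 0 := by omega
        have hC := WeakGalerkinAux.eq_C_of_totalDegree_eq_zero h0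
        have hev : ∀ a : ℝ, MvPolynomial.eval (Fin.cons a (0 : Fin N → ℝ)) Lmv
            = a + MvPolynomial.eval (0 : Fin N → ℝ) Bp := by
          intro a
          rw [hLmv, MvPolynomial.eval_eq_eval_mv_eval', AlgEquiv.apply_symm_apply, hM,
            Polynomial.map_add, Polynomial.map_X, Polynomial.map_C, Polynomial.eval_add,
            Polynomial.eval_X, Polynomial.eval_C]
        have h1 := hev 0
        have h2 := hev 1
        rw [hC, MvPolynomial.eval_C] at h1 h2
        linarith
      have hdegQ' : Q'.totalDegree < k := by
        have h1 : P'.totalDegree ≤ k := le_trans (MvPolynomial.totalDegree_rename_le _ _) hPdeg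
        rw [hP'fact, WeakGalerkinAux.totalDegree_mul_eq' hLne hQ'0] at h1
        omega
      have hdegQmv : Qmv.totalDegree < k :=
        lt_of_le_of_lt (MvPolynomial.totalDegree_rename_le _ _) hdegQ'
      set β := (n' 0)⁻¹ with hβ
      set qf : EuclideanSpace ℝ (Fin (N + 1)) → ℝ :=
        fun x => β * MvPolynomial.eval (fun i => x i) Qmv with hqf
      have hzero := hmomK qf ⟨MvPolynomial.C β * Qmv, by
          calc (MvPolynomial.C β * Qmv).totalDegree
              ≤ (MvPolynomial.C β).totalDegree + Qmv.totalDegree := MvPolynomial.totalDegree_mul _ _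
            _ = Qmv.totalDegree := by rw [MvPolynomial.totalDegree_C, zero_add]
            _ < k := hdegQmv,
        fun x => by rw [MvPolynomial.eval_mul, MvPolynomial.eval_C]⟩
      have hcontQ : Continuous fun x : EuclideanSpace ℝ (Fin (N + 1)) =>
          MvPolynomial.eval (fun i => x i) Qmv :=
        (MvPolynomial.continuous_eval Qmv).comp (continuous_pi fun i => (continuous_apply i).comp (PiLp.continuous_ofLp 2 _))
      have hcontf : Continuous fun x => p x * qf x := hcontp.mul (continuous_const.mul hcontQ)
      have hvolfin : (volume : Measure (EuclideanSpace ℝ (Fin (N + 1)))) K ≠ ⊤ :=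
        hKbdd.measure_lt_top.ne
      have hint : Integrable (fun x => p x * qf x) (volume.restrict K) :=
        WeakGalerkinAux.integrableOn_of_bounded volume hKbdd hvolfin hcontf
      have hKmeas : MeasurableSet K := hKopen.measurableSet
      have hexpand : ∀ x : EuclideanSpace ℝ (Fin (N + 1)),
          p x * qf x = β ^ 2 * ((⟪x, n⟫ - c) * (MvPolynomial.eval (fun i => x i) Qmv) ^ 2) := by
        intro x
        rw [hfinal x, hqf]
        ring
      have hnonneg : 0 ≤ᵐ[volume.restrict K] fun x => -(p x * qf x) := by
        rw [Filter.EventuallyLE, MeasureTheory.ae_restrict_iff' hKmeas]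
        apply MeasureTheory.ae_of_all
        intro x hx
        simp only [Pi.zero_apply]
        have h1 : ⟪x, n⟫ - c < 0 := sub_neg.mpr (hside x hx)
        rw [hexpand x]
        nlinarith [sq_nonneg β, sq_nonneg (MvPolynomial.eval (fun i => x i) Qmv),
          mul_nonneg (sq_nonneg β) (sq_nonneg (MvPolynomial.eval (fun i => x i) Qmv))]
      have hzero' : ∫ x in K, -(p x * qf x) ∂volume = 0 := by
        rw [integral_neg, hzero, neg_zero]
      have hae : (fun x => -(p x * qf x)) =ᵐ[volume.restrict K] 0 := by
        rw [← MeasureTheory.integral_eq_zero_iff_of_nonneg_ae hnonneg hint.neg]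
        exact hzero'
      have hmeasne : MeasurableSet {x : EuclideanSpace ℝ (Fin (N + 1)) | p x * qf x ≠ 0} :=
        (isOpen_compl_singleton.preimage hcontf).measurableSet
      have hnull : volume (K ∩ {x | p x * qf x ≠ 0}) = 0 := by
        rw [Filter.EventuallyEq, ae_iff] at hae
        have hseteq : {x : EuclideanSpace ℝ (Fin (N+1)) |
            ¬(fun x => -(p x * qf x)) x = (0 : EuclideanSpace ℝ (Fin (N+1)) → ℝ) x}
            = {x | p x * qf x ≠ 0} := by
          ext x; simp [neg_eq_zero]
        rw [hseteq, Measure.restrict_apply hmeasne] at hae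
        rw [Set.inter_comm]
        exact hae
      have hempty : K ∩ {x | p x * qf x ≠ 0} = ∅ :=
        (hKopen.inter (isOpen_compl_singleton.preimage hcontf)).eq_empty_of_measure_zero hnull
      have hpK : ∀ x ∈ K, p x = 0 := by
        intro x hx
        have hzp : p x * qf x = 0 := by
          by_contra h
          have hxmem : x ∈ K ∩ {x | p x * qf x ≠ 0} := ⟨hx, h⟩
          rw [hempty] at hxmem
          exact hxmem
        have hβ0 : β ≠ 0 := inv_ne_zero hn'0
        have hlt : ⟪x, n⟫ - c ≠ 0 := ne_of_lt (sub_neg.mpr (hside x hx))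
        rw [hexpand x] at hzp
        have hQx : MvPolynomial.eval (fun i => x i) Qmv = 0 := by
          rcases mul_eq_zero.mp hzp with h | h
          · exact absurd h (pow_ne_zero 2 hβ0)
          · rcases mul_eq_zero.mp h with h' | h'
            · exact absurd h' hlt
            · exact (pow_eq_zero_iff two_ne_zero).mp h'
        rw [hfinal x, hQx, mul_zero]
      have hPzero : P = 0 :=
        WeakGalerkinAux.eq_zero_of_zero_on_open P hKopen hKne
          (fun x hx => by rw [← hPeval]; exact hpK x hx)
      intro x
      rw [hPeval, hPzero]
      simp
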